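/- Bias bound for the RL-LOW relative-reward estimate: For every consistent offline RLHF instance v, every n ≥ 1 with n·N_{k,i,j} ∈ ℕ, and every (k,i) ∈ 𝒮 × 𝒜 with i ≠ i*_k, it holds that |E[r̂_{k,i*_k,i}] − (r_{k,i*_k} − r_{k,i})| ≤ 3·γ̃_{k,i}/((1−β)^4·√n), where β = e^{2L}/(1+e^{2L}) and γ̃_{k,i} = Σ_{(k',i',j'):N_{k',i',j'}>0} |w^{(k,i,i*_k)}_{k',i',j'}|/√(N_{k',i',j'}). -/

import Mathlib

open MeasureTheory ProbabilityTheory Real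

namespace RLHF

/-- The logistic sigmoid function. -/
noncomputable def sigmoid (x : ℝ) : ℝ := Real.exp x / (1 + Real.exp x)

/-- Clipping to the interval `[1/(1+e^{2L}), e^{2L}/(1+e^{2L})]`. -/
noncomputable def clip (L x : ℝ) : ℝ :=
  max (1 / (1 + Real.exp (2 * L))) (min (Real.exp (2 * L) / (1 + Real.exp (2 * L))) x)

/-- The logit (log-odds) function. -/
noncomputable def logit (x : ℝ) : ℝ := Real.log (x / (1 - x))

/-- An offline RLHF instance: state distribution, feature map, parameter vector and
sampling proportions. -/
structure Inst (S A d : ℕ) where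
  ρ : Fin S → ℝ
  φ : Fin S → Fin A → EuclideanSpace ℝ (Fin d)
  θ : EuclideanSpace ℝ (Fin d)
  N : Fin S → Fin A → Fin A → ℝ
  ρ_pos : ∀ k, 0 < ρ k
  ρ_sum : ∑ k, ρ k = 1
  N_nonneg : ∀ k i j, 0 ≤ N k i j
  N_sum : ∑ k, ∑ i, ∑ j, N k i j = 1
  φ_ne : ∀ k i j, i ≠ j → φ k i ≠ φ k j

namespace Inst

variable {S A d : ℕ}

/-- The reward of action `i` in state `k`. -/
noncomputable def r (v : Inst S A d) (k : Fin S) (i : Fin A) : ℝ :=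
  @inner ℝ _ _ (v.φ k i) v.θ

/-- The span of the sampled feature differences. -/
def W (v : Inst S A d) : Submodule ℝ (EuclideanSpace ℝ (Fin d)) :=
  Submodule.span ℝ {x | ∃ k i j, 0 < v.N k i j ∧ x = v.φ k i - v.φ k j}

/-- Consistency of an instance. -/
def Consistent (v : Inst S A d) : Prop :=
  ∀ k i j, v.φ k i - v.φ k j ∈ v.W

/-- `istar` assigns to each state its unique best action. -/
def BestAction (v : Inst S A d) (istar : Fin S → Fin A) : Prop :=
  ∀ k j, j ≠ istar k → v.r k j < v.r k (istar k)

/-- The suboptimality gap. -/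
noncomputable def gap (v : Inst S A d) (istar : Fin S → Fin A) (k : Fin S) (i : Fin A) : ℝ :=
  v.r k (istar k) - v.r k i

/-- The objective value of a candidate weight vector. -/
noncomputable def cost (v : Inst S A d) (u : Fin S → Fin A → Fin A → ℝ) : ℝ :=
  ∑ k', ∑ i', ∑ j', if 0 < v.N k' i' j' then (u k' i' j') ^ 2 / v.N k' i' j' else 0

/-- Feasibility of a weight vector for the pair `(i,j)` in state `k`: it vanishes where
`N` vanishes and expresses `φ(k,i) − φ(k,j)` as a linear combination of sampled feature
differences. -/
def Feasible (v : Inst S A d) (k : Fin S) (i j : Fin A)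
    (u : Fin S → Fin A → Fin A → ℝ) : Prop :=
  (∀ k' i' j', v.N k' i' j' = 0 → u k' i' j' = 0) ∧
  v.φ k i - v.φ k j = ∑ k', ∑ i', ∑ j', u k' i' j' • (v.φ k' i' - v.φ k' j')

/-- `w` is a locally optimal weight vector for `(k,i,j)`. -/
def IsLOW (v : Inst S A d) (k : Fin S) (i j : Fin A)
    (w : Fin S → Fin A → Fin A → ℝ) : Prop :=
  v.Feasible k i j w ∧ ∀ u, v.Feasible k i j u → v.cost w ≤ v.cost u

/-- `γ̃_{k,i}`-type quantity: weighted sum of absolute weights over `1/√N`. -/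
noncomputable def gammaTilde (v : Inst S A d) (u : Fin S → Fin A → Fin A → ℝ) : ℝ :=
  ∑ k', ∑ i', ∑ j',
    if 0 < v.N k' i' j' then |u k' i' j'| / Real.sqrt (v.N k' i' j') else 0

/-- `γ^DP`-type quantity. -/
noncomputable def gammaDP (v : Inst S A d) (u : Fin S → Fin A → Fin A → ℝ) : ℝ :=
  ∑ k', ∑ i', ∑ j',
    if 0 < v.N k' i' j' then (u k' i' j' / v.N k' i' j') ^ 2 else 0

/-- `γ̃^DP`-type quantity. -/
noncomputable def gammaTildeDP (v : Inst S A d) (u : Fin S → Fin A → Fin A → ℝ) : ℝ :=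
  ∑ k', ∑ i', ∑ j',
    if 0 < v.N k' i' j' then |u k' i' j'| / v.N k' i' j' else 0

/-- The hardness parameter `H(v)`, where `w k i j` denotes the locally optimal weights
for the triple `(k,i,j)`. -/
noncomputable def H (v : Inst S A d) (istar : Fin S → Fin A)
    (w : Fin S → Fin A → Fin A → Fin S → Fin A → Fin A → ℝ) : ℝ :=
  sSup {x | ∃ k i, i ≠ istar k ∧
    x = v.cost (w k i (istar k)) / (v.gap istar k i) ^ 2}

/-- The DP hardness parameter `H_DP^{(ε,δ)}(v)`. -/
noncomputable def HDP (v : Inst S A d) (istar : Fin S → Fin A)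
    (w : Fin S → Fin A → Fin A → Fin S → Fin A → Fin A → ℝ) (ε δ : ℝ) : ℝ :=
  sSup {x | ∃ k i, i ≠ istar k ∧
    x = Real.sqrt (Real.log (1.25 / δ) * v.gammaDP (w k i (istar k))) /
        (Real.sqrt ε * v.gap istar k i)}

/-- The empirical success proportion `B_{k,i,j}` computed from counts `y`. -/
noncomputable def B (v : Inst S A d) (n : ℕ) (y : Fin S → Fin A → Fin A → ℕ)
    (k : Fin S) (i j : Fin A) : ℝ :=
  if 0 < v.N k i j then (y k i j : ℝ) / (n * v.N k i j) else 0

/-- The RL-LOW relative reward estimate `r̂_{k,i,j}` computed from counts `y`. -/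
noncomputable def rhat (v : Inst S A d) (L : ℝ) (n : ℕ)
    (w : Fin S → Fin A → Fin A → Fin S → Fin A → Fin A → ℝ)
    (y : Fin S → Fin A → Fin A → ℕ) (k : Fin S) (i j : Fin A) : ℝ :=
  if i = j then 0 else
    ∑ k', ∑ i', ∑ j', w k i j k' i' j' * logit (clip L (v.B n y k' i' j'))

/-- The DP-RL-LOW private relative reward estimate `r̃_{k,i,j}` computed from counts `y`
and Gaussian noise realizations `z`. -/
noncomputable def rtilde (v : Inst S A d) (L : ℝ) (n : ℕ)
    (w : Fin S → Fin A → Fin A → Fin S → Fin A → Fin A → ℝ)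
    (y : Fin S → Fin A → Fin A → ℕ) (z : Fin S → Fin A → Fin A → ℝ)
    (k : Fin S) (i j : Fin A) : ℝ :=
  if i = j then 0 else
    ∑ k', ∑ i', ∑ j', w k i j k' i' j' *
      logit (clip L
        (if 0 < v.N k' i' j' then
          (y k' i' j' : ℝ) / (n * v.N k' i' j') + z k' i' j' else 0))

/-- Simple regret of the action assignment `ihat` (using the best actions `istar`). -/
noncomputable def regret (v : Inst S A d) (istar : Fin S → Fin A)
    (ihat : Fin S → Fin A) : ℝ :=
  ∑ k, v.ρ k * (v.r k (istar k) - v.r k (ihat k))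

/-- Simple regret of the action assignment `ihat` (via suprema of rewards; this does not
require the best action to be unique). -/
noncomputable def regretSup (v : Inst S A d) (ihat : Fin S → Fin A) : ℝ :=
  ∑ k, v.ρ k * ((⨆ j, v.r k j) - v.r k (ihat k))

end Inst

/-- `Y` has the binomial law with `m` trials and success probability `p` under `P`. -/
def HasBinomialLaw {Ω : Type*} [MeasurableSpace Ω] (P : Measure Ω)
    (Y : Ω → ℕ) (m : ℕ) (p : ℝ) : Prop :=
  ∀ t : ℕ, P {ω | Y ω = t} =
    ENNReal.ofReal ((m.choose t : ℝ) * p ^ t * (1 - p) ^ (m - t))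

/-- The data model of offline RLHF with pairwise comparisons: for each triple `(k,i,j)`
with `N_{k,i,j} > 0`, the count `Y k i j` is binomial with `n·N_{k,i,j}` trials and
success probability `σ(r_{k,i} − r_{k,j})`, and these counts are independent. -/
def IsBTLSample {S A d : ℕ} (v : Inst S A d) (n : ℕ) {Ω : Type*} [MeasurableSpace Ω]
    (P : Measure Ω) (Y : Fin S → Fin A → Fin A → Ω → ℕ) : Prop :=
  (∀ k i j, Measurable (Y k i j)) ∧
  (∀ k i j, 0 < v.N k i j →
    HasBinomialLaw P (Y k i j) ⌈(n : ℝ) * v.N k i j⌉₊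
      (sigmoid (v.r k i - v.r k j))) ∧
  iIndepFun
    (fun (t : {t : Fin S × Fin A × Fin A // 0 < v.N t.1 t.2.1 t.2.2}) =>
      fun ω => (Y t.1.1 t.1.2.1 t.1.2.2 ω : ℝ)) P

/-- The data model of DP-RL-LOW: on top of the BTL counts, for each triple with
`N_{k,i,j} > 0` there is Gaussian noise `ξ k i j` of mean `0` and variance
`2·log(1.25/δ)/(ε·n·N_{k,i,j})²`, and all counts and noises are jointly independent. -/
def IsDPSample {S A d : ℕ} (v : Inst S A d) (n : ℕ) (ε δ : ℝ) {Ω : Type*}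
    [MeasurableSpace Ω] (P : Measure Ω)
    (Y : Fin S → Fin A → Fin A → Ω → ℕ) (ξ : Fin S → Fin A → Fin A → Ω → ℝ) : Prop :=
  (∀ k i j, Measurable (Y k i j)) ∧
  (∀ k i j, Measurable (ξ k i j)) ∧
  (∀ k i j, 0 < v.N k i j →
    HasBinomialLaw P (Y k i j) ⌈(n : ℝ) * v.N k i j⌉₊
      (sigmoid (v.r k i - v.r k j))) ∧
  (∀ k i j, 0 < v.N k i j →
    P.map (ξ k i j) =
      gaussianReal 0
        (Real.toNNReal (2 * Real.log (1.25 / δ) / (ε * n * v.N k i j) ^ 2))) ∧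
  iIndepFun
    (fun (t : {t : Fin S × Fin A × Fin A // 0 < v.N t.1 t.2.1 t.2.2} ⊕
              {t : Fin S × Fin A × Fin A // 0 < v.N t.1 t.2.1 t.2.2}) =>
      Sum.elim
        (fun t => fun ω => (Y t.1.1 t.1.2.1 t.1.2.2 ω : ℝ))
        (fun t => ξ t.1.1 t.1.2.1 t.1.2.2) t) P

end RLHF

open RLHF

section BiasBoundHelpers

open MeasureTheory Finset Real RLHF

/-! ### Binomial moment identities -/

private lemma binom_b0 (m : ℕ) (p : ℝ) :
    ∑ t ∈ Finset.range (m+1), p ^ t * (1-p) ^ (m-t) * (m.choose t : ℝ) = 1 := by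
  have h := add_pow p (1-p) m
  simp only [add_sub_cancel, one_pow] at h
  exact h.symm

private lemma binom_b1 (m : ℕ) (p : ℝ) :
    ∑ t ∈ Finset.range (m+1), (t : ℝ) * (p ^ t * (1-p) ^ (m-t) * (m.choose t : ℝ))
      = m * p := by
  cases m with
  | zero => simp
  | succ m' =>
    rw [Finset.sum_range_succ']
    have key : ∀ s ∈ Finset.range (m' + 1),
        ((s+1 : ℕ) : ℝ) * (p ^ (s+1) * (1-p) ^ (m'+1-(s+1)) * ((m'+1).choose (s+1) : ℝ))
        = ((m'+1 : ℕ) : ℝ) * p * (p ^ s * (1-p) ^ (m'-s) * (m'.choose s : ℝ)) := by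
      intro s _
      have hc : ((s+1 : ℕ) : ℝ) * (((m'+1).choose (s+1) : ℕ) : ℝ)
          = (((m'+1) : ℕ) : ℝ) * ((m'.choose s : ℕ) : ℝ) := by
        have h1 : (m'+1) * (m'.choose s) = (m'+1).choose (s+1) * (s+1) :=
          Nat.add_one_mul_choose_eq m' s
        exact_mod_cast by rw [h1]; ring
      have hsub : m' + 1 - (s + 1) = m' - s := by omega
      rw [hsub, pow_succ]
      push_cast at hc ⊢
      linear_combination (p ^ s * p * (1-p) ^ (m'-s)) * hc
    rw [Finset.sum_congr rfl key]
    push_cast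
    rw [← Finset.mul_sum, binom_b0 m' p]
    simp

private lemma binom_b2 (m : ℕ) (p : ℝ) :
    ∑ t ∈ Finset.range (m+1),
      (t : ℝ) * ((t : ℝ) - 1) * (p ^ t * (1-p) ^ (m-t) * (m.choose t : ℝ))
      = m * ((m:ℝ) - 1) * p ^ 2 := by
  cases m with
  | zero => simp
  | succ m' =>
    rw [Finset.sum_range_succ']
    have key : ∀ s ∈ Finset.range (m' + 1),
        ((s+1 : ℕ) : ℝ) * (((s+1 : ℕ) : ℝ) - 1) *
          (p ^ (s+1) * (1-p) ^ (m'+1-(s+1)) * ((m'+1).choose (s+1) : ℝ))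
        = ((m'+1 : ℕ) : ℝ) * p *
            ((s : ℝ) * (p ^ s * (1-p) ^ (m'-s) * (m'.choose s : ℝ))) := by
      intro s _
      have hc : ((s+1 : ℕ) : ℝ) * (((m'+1).choose (s+1) : ℕ) : ℝ)
          = (((m'+1) : ℕ) : ℝ) * ((m'.choose s : ℕ) : ℝ) := by
        have h1 : (m'+1) * (m'.choose s) = (m'+1).choose (s+1) * (s+1) :=
          Nat.add_one_mul_choose_eq m' s
        exact_mod_cast by rw [h1]; ring
      have hsub : m' + 1 - (s + 1) = m' - s := by omega
      rw [hsub, pow_succ]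
      push_cast at hc ⊢
      linear_combination (s * p ^ s * p * (1-p) ^ (m'-s)) * hc
    rw [Finset.sum_congr rfl key]
    push_cast
    rw [← Finset.mul_sum, binom_b1 m' p]
    ring

private lemma binom_var (m : ℕ) (p : ℝ) :
    ∑ t ∈ Finset.range (m+1),
      ((t : ℝ) - m * p) ^ 2 * (p ^ t * (1-p) ^ (m-t) * (m.choose t : ℝ))
      = m * p * (1 - p) := by
  have expand : ∀ t ∈ Finset.range (m+1),
      ((t : ℝ) - m * p) ^ 2 * (p ^ t * (1-p) ^ (m-t) * (m.choose t : ℝ))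
      = (t : ℝ) * ((t : ℝ) - 1) * (p ^ t * (1-p) ^ (m-t) * (m.choose t : ℝ))
        + (1 - 2 * m * p) * ((t : ℝ) * (p ^ t * (1-p) ^ (m-t) * (m.choose t : ℝ)))
        + (m * p) ^ 2 * (p ^ t * (1-p) ^ (m-t) * (m.choose t : ℝ)) := by
    intro t _; ring
  rw [Finset.sum_congr rfl expand, Finset.sum_add_distrib, Finset.sum_add_distrib,
    binom_b2, ← Finset.mul_sum, binom_b1, ← Finset.mul_sum, binom_b0]
  ring

/-! ### Integration against a binomial law -/

private lemma integral_binomial {Ω : Type} [MeasurableSpace Ω] (P : Measure Ω)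
    [IsProbabilityMeasure P] (Y : Ω → ℕ) (hmY : Measurable Y) (m : ℕ) {p : ℝ}
    (hp0 : 0 ≤ p) (hp1 : p ≤ 1)
    (hb : HasBinomialLaw P Y m p) (f : ℕ → ℝ) :
    Integrable (fun ω => f (Y ω)) P ∧
    ∫ ω, f (Y ω) ∂P =
      ∑ t ∈ Finset.range (m+1), f t * (p ^ t * (1-p) ^ (m-t) * (m.choose t : ℝ)) := by
  classical
  set g : Ω → ℝ := fun ω =>
    ∑ t ∈ Finset.range (m+1), (Y ⁻¹' {t}).indicator (fun _ => f t) ω with hg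
  have hmeas : ∀ t : ℕ, MeasurableSet (Y ⁻¹' {t}) := fun t =>
    hmY (measurableSet_singleton t)
  have hnull : P {ω | ¬ Y ω < m + 1} = 0 := by
    have hsub : {ω | ¬ Y ω < m + 1} ⊆ ⋃ s : ℕ, {ω | Y ω = m + 1 + s} := by
      intro ω hω
      simp only [Set.mem_setOf_eq, not_lt] at hω
      exact Set.mem_iUnion.2 ⟨Y ω - (m+1), by simp only [Set.mem_setOf_eq]; omega⟩
    refine measure_mono_null hsub (measure_iUnion_null fun s => ?_)
    rw [hb]
    have : m.choose (m + 1 + s) = 0 := Nat.choose_eq_zero_of_lt (by omega)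
    simp [this]
  have hae : (fun ω => f (Y ω)) =ᵐ[P] g := by
    have hlt : ∀ᵐ ω ∂P, Y ω < m + 1 := by
      rw [ae_iff]; exact hnull
    filter_upwards [hlt] with ω hω
    have hterm : ∀ t ∈ Finset.range (m+1),
        (Y ⁻¹' {t}).indicator (fun _ => f t) ω = if Y ω = t then f t else 0 := by
      intro t _
      by_cases h : Y ω = t <;> simp [Set.indicator, h]
    rw [hg]
    simp only []
    rw [Finset.sum_congr rfl hterm,
      Finset.sum_ite_eq (Finset.range (m+1)) (Y ω) (fun t => f t)]
    simp [Finset.mem_range.2 hω]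
  have hint_g : Integrable g P := by
    refine integrable_finset_sum _ fun t _ => ?_
    exact (integrable_const (f t)).indicator (hmeas t)
  have hint : Integrable (fun ω => f (Y ω)) P := hint_g.congr hae.symm
  refine ⟨hint, ?_⟩
  rw [integral_congr_ae hae, hg]
  rw [integral_finset_sum _ fun t _ => (integrable_const (f t)).indicator (hmeas t)]
  refine Finset.sum_congr rfl fun t _ => ?_
  rw [integral_indicator_const (f t) (hmeas t)]
  have hPt : P (Y ⁻¹' {t}) = ENNReal.ofReal ((m.choose t : ℝ) * p ^ t * (1-p) ^ (m-t)) := by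
    have : Y ⁻¹' {t} = {ω | Y ω = t} := rfl
    rw [this, hb]
  have h1p : (0:ℝ) ≤ 1 - p := by linarith
  rw [measureReal_def, hPt, ENNReal.toReal_ofReal (by positivity)]
  simp [smul_eq_mul]; ring

/-! ### Sigmoid, logit, clip -/

private lemma logit_sigmoid (x : ℝ) : logit (RLHF.sigmoid x) = x := by
  have he : (0:ℝ) < Real.exp x := Real.exp_pos x
  have hd : (0:ℝ) < 1 + Real.exp x := by linarith
  have h1 : 1 - RLHF.sigmoid x = 1 / (1 + Real.exp x) := by
    unfold RLHF.sigmoid; field_simp; ring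
  have h2 : RLHF.sigmoid x / (1 - RLHF.sigmoid x) = Real.exp x := by
    rw [h1]; unfold RLHF.sigmoid; field_simp
  rw [logit, h2, Real.log_exp]

private lemma sigmoid_mono {x y : ℝ} (h : x ≤ y) : RLHF.sigmoid x ≤ RLHF.sigmoid y := by
  have hx := Real.exp_pos x
  have hy := Real.exp_pos y
  have hxy : Real.exp x ≤ Real.exp y := Real.exp_le_exp.2 h
  unfold RLHF.sigmoid
  rw [div_le_div_iff₀ (by linarith) (by linarith)]
  nlinarith

private lemma sigmoid_neg2L (L : ℝ) :
    RLHF.sigmoid (-(2 * L)) = 1 / (1 + Real.exp (2 * L)) := by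
  have hE := Real.exp_pos (2 * L)
  unfold RLHF.sigmoid
  rw [Real.exp_neg]
  field_simp
  ring

private lemma sigmoid_mem {L Δ : ℝ} (h : |Δ| ≤ 2 * L) :
    RLHF.sigmoid Δ ∈ Set.Icc (1 / (1 + Real.exp (2 * L)))
      (Real.exp (2 * L) / (1 + Real.exp (2 * L))) := by
  obtain ⟨h1, h2⟩ := abs_le.1 h
  constructor
  · rw [← sigmoid_neg2L]; exact sigmoid_mono h1
  · exact sigmoid_mono h2

private lemma clip_mem (L x : ℝ) (hL : 0 ≤ L) :
    clip L x ∈ Set.Icc (1 / (1 + Real.exp (2 * L)))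
      (Real.exp (2 * L) / (1 + Real.exp (2 * L))) := by
  have hE1 : (1:ℝ) ≤ Real.exp (2 * L) := by
    rw [← Real.exp_zero]; exact Real.exp_le_exp.2 (by linarith)
  have hd : (0:ℝ) < 1 + Real.exp (2 * L) := by linarith
  have hab : 1 / (1 + Real.exp (2 * L)) ≤ Real.exp (2 * L) / (1 + Real.exp (2 * L)) := by
    gcongr
  constructor
  · exact le_max_left _ _
  · rw [clip]
    rcases le_total (Real.exp (2 * L) / (1 + Real.exp (2 * L))) x with h | h
    · rw [min_eq_left h, max_eq_right hab]
    · simp only [min_eq_right h]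
      exact max_le hab h

private lemma clip_dist {L x p : ℝ}
    (hp : p ∈ Set.Icc (1 / (1 + Real.exp (2 * L)))
      (Real.exp (2 * L) / (1 + Real.exp (2 * L)))) :
    |clip L x - p| ≤ |x - p| := by
  obtain ⟨hp1, hp2⟩ := hp
  rw [clip]
  rcases le_total x (1 / (1 + Real.exp (2 * L))) with h | h
  · rw [min_eq_right (le_trans h (le_trans hp1 hp2)), max_eq_left h]
    rw [abs_sub_comm, abs_of_nonneg (by linarith), abs_sub_comm, abs_of_nonneg (by linarith)]
    linarith
  · rcases le_total x (Real.exp (2 * L) / (1 + Real.exp (2 * L))) with h2 | h2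
    · rw [min_eq_right h2, max_eq_right h]
    · rw [min_eq_left h2, max_eq_right (le_trans hp1 hp2)]
      rw [abs_of_nonneg (by linarith), abs_of_nonneg (by linarith)]
      linarith

private lemma log_lip {a u v : ℝ} (ha : 0 < a) (hu : a ≤ u) (hv : a ≤ v) :
    |Real.log u - Real.log v| ≤ |u - v| / a := by
  have key : ∀ x y : ℝ, a ≤ x → a ≤ y → y ≤ x →
      Real.log x - Real.log y ≤ (x - y) / a := by
    intro x y hx hy hyx
    have hy0 : 0 < y := lt_of_lt_of_le ha hy
    have hx0 : 0 < x := lt_of_lt_of_le ha hx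
    have h1 : Real.log x - Real.log y = Real.log (x / y) := (Real.log_div hx0.ne' hy0.ne').symm
    rw [h1]
    have h2 : Real.log (x / y) ≤ x / y - 1 := Real.log_le_sub_one_of_pos (by positivity)
    have h3 : x / y - 1 = (x - y) / y := by field_simp
    have h4 : (x - y) / y ≤ (x - y) / a := by
      apply div_le_div_of_nonneg_left (by linarith) ha hy
    linarith
  rcases le_total v u with h | h
  · rw [abs_of_nonneg (sub_nonneg.2 (Real.log_le_log (lt_of_lt_of_le ha hv) h)),
      abs_of_nonneg (by linarith)]
    exact key u v hu hv h
  · rw [abs_sub_comm, abs_sub_comm u v,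
      abs_of_nonneg (sub_nonneg.2 (Real.log_le_log (lt_of_lt_of_le ha hu) h)),
      abs_of_nonneg (by linarith)]
    exact key v u hv hu h

private lemma logit_lip {a u v : ℝ} (ha : 0 < a)
    (hu : u ∈ Set.Icc a (1-a)) (hv : v ∈ Set.Icc a (1-a)) :
    |logit u - logit v| ≤ 2 / a * |u - v| := by
  obtain ⟨hu1, hu2⟩ := hu
  obtain ⟨hv1, hv2⟩ := hv
  have hu0 : 0 < u := lt_of_lt_of_le ha hu1
  have hv0 : 0 < v := lt_of_lt_of_le ha hv1
  have hu1' : a ≤ 1 - u := by linarith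
  have hv1' : a ≤ 1 - v := by linarith
  have e1 : logit u = Real.log u - Real.log (1 - u) := by
    rw [logit, Real.log_div hu0.ne' (by linarith)]
  have e2 : logit v = Real.log v - Real.log (1 - v) := by
    rw [logit, Real.log_div hv0.ne' (by linarith)]
  have h1 := log_lip ha hu1 hv1
  have h2 := log_lip ha hu1' hv1'
  have h3 : |(1 - u) - (1 - v)| = |u - v| := by
    rw [show (1 - u) - (1 - v) = -(u - v) by ring, abs_neg]
  rw [e1, e2]
  calc |Real.log u - Real.log (1-u) - (Real.log v - Real.log (1-v))|
      ≤ |Real.log u - Real.log v| + |Real.log (1-u) - Real.log (1-v)| := by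
        rw [show Real.log u - Real.log (1-u) - (Real.log v - Real.log (1-v))
          = (Real.log u - Real.log v) - (Real.log (1-u) - Real.log (1-v)) by ring]
        exact abs_sub _ _
    _ ≤ |u - v| / a + |u - v| / a := by
        refine add_le_add h1 ?_
        rw [← h3]; exact h2
    _ = 2 / a * |u - v| := by ring

/-! ### The per-term bias bound -/

private lemma key_term (L : ℝ) (hL : 0 < L) {Ω : Type} [MeasurableSpace Ω] (P : Measure Ω)
    [IsProbabilityMeasure P] (Y : Ω → ℕ) (hmY : Measurable Y) (m : ℕ) (hm : 1 ≤ m)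
    (Δ : ℝ) (hΔ : |Δ| ≤ 2 * L)
    (hb : HasBinomialLaw P Y m (RLHF.sigmoid Δ)) :
    Integrable (fun ω => logit (clip L ((Y ω : ℝ) / m))) P ∧
    |(∫ ω, logit (clip L ((Y ω : ℝ) / m)) ∂P) - Δ| ≤
      (1 + Real.exp (2 * L)) / Real.sqrt m := by
  have hE : (0:ℝ) < Real.exp (2 * L) := Real.exp_pos _
  have hE1 : (1:ℝ) ≤ Real.exp (2 * L) := by
    rw [← Real.exp_zero]; exact Real.exp_le_exp.2 (by linarith)
  set a : ℝ := 1 / (1 + Real.exp (2 * L)) with ha_def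
  have ha : 0 < a := by positivity
  have hb_eq : Real.exp (2 * L) / (1 + Real.exp (2 * L)) = 1 - a := by
    rw [ha_def]; field_simp; ring
  set p : ℝ := RLHF.sigmoid Δ with hp_def
  have hp_mem : p ∈ Set.Icc a (1 - a) := by
    have := sigmoid_mem hΔ
    rwa [← hb_eq]
  have hp0 : 0 ≤ p := le_trans ha.le hp_mem.1
  have hp1 : p ≤ 1 := by have := hp_mem.2; linarith
  set f : ℕ → ℝ := fun t => logit (clip L ((t : ℝ) / m)) with hf
  obtain ⟨hint, hrep⟩ := integral_binomial P Y hmY m hp0 hp1 hb f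
  refine ⟨hint, ?_⟩
  rw [hrep]
  set b : ℕ → ℝ := fun t => p ^ t * (1-p) ^ (m-t) * (m.choose t : ℝ) with hbdef
  have hb_nonneg : ∀ t, 0 ≤ b t := by
    intro t
    have : (0:ℝ) ≤ 1 - p := by linarith
    positivity
  have hb0 : ∑ t ∈ Finset.range (m+1), b t = 1 := binom_b0 m p
  have hΔrep : Δ = ∑ t ∈ Finset.range (m+1), Δ * b t := by
    rw [← Finset.mul_sum, hb0, mul_one]
  have hm0 : (0:ℝ) < m := by exact_mod_cast hm
  have hclipmem : ∀ x : ℝ, clip L x ∈ Set.Icc a (1 - a) := by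
    intro x
    have := clip_mem L x hL.le
    rwa [← hb_eq]
  have hlogitp : logit p = Δ := logit_sigmoid Δ
  have hclipp : clip L p = p := by
    rw [clip, ← ha_def, hb_eq, min_eq_right hp_mem.2, max_eq_right hp_mem.1]
  have hpoint : ∀ t : ℕ, |f t - Δ| ≤ 2 / a * |(t:ℝ)/m - p| := by
    intro t
    have h1 : |f t - Δ| = |logit (clip L ((t:ℝ)/m)) - logit p| := by rw [hlogitp]
    rw [h1]
    calc |logit (clip L ((t:ℝ)/m)) - logit p|
        ≤ 2 / a * |clip L ((t:ℝ)/m) - p| := logit_lip ha (hclipmem _) hp_mem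
      _ ≤ 2 / a * |(t:ℝ)/m - p| := by
          have h2 : |clip L ((t:ℝ)/m) - p| ≤ |(t:ℝ)/m - p| := by
            apply clip_dist
            rw [hb_eq]; exact hp_mem
          have : (0:ℝ) ≤ 2 / a := by positivity
          exact mul_le_mul_of_nonneg_left h2 this
  have hCS : ∑ t ∈ Finset.range (m+1), |(t:ℝ)/m - p| * b t ≤ 1 / (2 * Real.sqrt m) := by
    set x : ℕ → ℝ := fun t => |(t:ℝ)/m - p|
    have key : (∑ t ∈ Finset.range (m+1), x t * b t) ^ 2
        ≤ (∑ t ∈ Finset.range (m+1), (x t)^2 * b t) *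
          (∑ t ∈ Finset.range (m+1), b t) := by
      have h := Finset.sum_mul_sq_le_sq_mul_sq (Finset.range (m+1))
        (fun t => x t * Real.sqrt (b t)) (fun t => Real.sqrt (b t))
      have e1 : ∀ t ∈ Finset.range (m+1),
          (x t * Real.sqrt (b t)) * Real.sqrt (b t) = x t * b t := by
        intro t _
        rw [mul_assoc, Real.mul_self_sqrt (hb_nonneg t)]
      have e2 : ∀ t ∈ Finset.range (m+1),
          (x t * Real.sqrt (b t))^2 = (x t)^2 * b t := by
        intro t _
        rw [mul_pow, Real.sq_sqrt (hb_nonneg t)]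
      have e3 : ∀ t ∈ Finset.range (m+1),
          (Real.sqrt (b t))^2 = b t := fun t _ => Real.sq_sqrt (hb_nonneg t)
      rw [Finset.sum_congr rfl e1, Finset.sum_congr rfl e2, Finset.sum_congr rfl e3] at h
      exact h
    rw [hb0, mul_one] at key
    have hvar : ∑ t ∈ Finset.range (m+1), (x t)^2 * b t = p * (1-p) / m := by
      have : ∀ t ∈ Finset.range (m+1), (x t)^2 * b t
          = (((t:ℝ) - m * p)^2 * b t) / m^2 := by
        intro t _
        have : x t ^ 2 = ((t:ℝ)/m - p)^2 := sq_abs _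
        rw [this]
        field_simp
      rw [Finset.sum_congr rfl this, ← Finset.sum_div, binom_var m p]
      field_simp
    have hsum_nonneg : 0 ≤ ∑ t ∈ Finset.range (m+1), x t * b t :=
      Finset.sum_nonneg fun t _ => mul_nonneg (abs_nonneg _) (hb_nonneg t)
    have hpq : p * (1 - p) ≤ 1/4 := by nlinarith [sq_nonneg (p - 1/2)]
    have h4 : (∑ t ∈ Finset.range (m+1), x t * b t) ^ 2 ≤ 1 / (4 * m) := by
      rw [hvar] at key
      calc (∑ t ∈ Finset.range (m+1), x t * b t) ^ 2 ≤ p * (1-p) / m := key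
        _ ≤ 1 / (4 * m) := by
            rw [div_le_div_iff₀ hm0 (by positivity)]
            nlinarith
    have hsm : (0:ℝ) < Real.sqrt m := Real.sqrt_pos.2 hm0
    have h5 : (1 / (2 * Real.sqrt m))^2 = 1 / (4 * m) := by
      rw [div_pow, mul_pow, Real.sq_sqrt hm0.le]; norm_num
    have h6 : Real.sqrt (1 / (4 * m)) = 1 / (2 * Real.sqrt m) := by
      rw [show (1:ℝ)/(4*(m:ℝ)) = (1/(2*Real.sqrt m))^2 from h5.symm,
        Real.sqrt_sq (by positivity)]
    calc ∑ t ∈ Finset.range (m+1), x t * b t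
        = Real.sqrt ((∑ t ∈ Finset.range (m+1), x t * b t)^2) :=
          (Real.sqrt_sq hsum_nonneg).symm
      _ ≤ Real.sqrt (1 / (4 * m)) := Real.sqrt_le_sqrt h4
      _ = 1 / (2 * Real.sqrt m) := h6
  have hsm : (0:ℝ) < Real.sqrt m := Real.sqrt_pos.2 hm0
  calc |(∑ t ∈ Finset.range (m+1), f t * b t) - Δ|
      = |∑ t ∈ Finset.range (m+1), (f t - Δ) * b t| := by
        rw [show ∑ t ∈ Finset.range (m+1), (f t - Δ) * b t
          = (∑ t ∈ Finset.range (m+1), f t * b t)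
            - ∑ t ∈ Finset.range (m+1), Δ * b t by
            rw [← Finset.sum_sub_distrib]; exact Finset.sum_congr rfl fun t _ => by ring]
        rw [← hΔrep]
    _ ≤ ∑ t ∈ Finset.range (m+1), |f t - Δ| * b t := by
        refine (Finset.abs_sum_le_sum_abs _ _).trans (le_of_eq ?_)
        exact Finset.sum_congr rfl fun t _ => by
          rw [abs_mul, abs_of_nonneg (hb_nonneg t)]
    _ ≤ ∑ t ∈ Finset.range (m+1), (2 / a * |(t:ℝ)/m - p|) * b t := by
        refine Finset.sum_le_sum fun t _ => ?_
        exact mul_le_mul_of_nonneg_right (hpoint t) (hb_nonneg t)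
    _ = 2 / a * ∑ t ∈ Finset.range (m+1), |(t:ℝ)/m - p| * b t := by
        rw [Finset.mul_sum]
        exact Finset.sum_congr rfl fun t _ => by ring
    _ ≤ 2 / a * (1 / (2 * Real.sqrt m)) := by
        refine mul_le_mul_of_nonneg_left hCS (by positivity)
    _ = (1 + Real.exp (2 * L)) / Real.sqrt m := by
        rw [ha_def]
        field_simp

/-! ### Flattening triple sums -/

private lemma triple_sum {S A : ℕ} {M : Type*} [AddCommMonoid M]
    (f : Fin S → Fin A → Fin A → M) :
    (∑ k', ∑ i', ∑ j', f k' i' j')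
      = ∑ t : Fin S × Fin A × Fin A, f t.1 t.2.1 t.2.2 := by
  rw [Fintype.sum_prod_type]
  exact Finset.sum_congr rfl fun k' _ => by rw [Fintype.sum_prod_type]

end BiasBoundHelpers

section LowHelpers

open Finset RLHF

variable {S A d : ℕ}

private lemma cost_flat (v : Inst S A d) (u : Fin S → Fin A → Fin A → ℝ) :
    v.cost u = ∑ t : Fin S × Fin A × Fin A,
      (if 0 < v.N t.1 t.2.1 t.2.2 then (u t.1 t.2.1 t.2.2) ^ 2 / v.N t.1 t.2.1 t.2.2
        else 0) := by
  rw [Inst.cost, triple_sum (f := fun k' i' j' =>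
    if 0 < v.N k' i' j' then (u k' i' j') ^ 2 / v.N k' i' j' else 0)]

private lemma feas_flat (v : Inst S A d) (k : Fin S) (i j : Fin A)
    (u : Fin S → Fin A → Fin A → ℝ) (h : v.Feasible k i j u) :
    v.φ k i - v.φ k j = ∑ t : Fin S × Fin A × Fin A,
      u t.1 t.2.1 t.2.2 • (v.φ t.1 t.2.1 - v.φ t.1 t.2.2) := by
  rw [h.2, triple_sum (f := fun k' i' j' => u k' i' j' • (v.φ k' i' - v.φ k' j'))]

private lemma feas_neg (v : Inst S A d) (k : Fin S) (i j : Fin A)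
    (u : Fin S → Fin A → Fin A → ℝ) (h : v.Feasible k i j u) :
    v.Feasible k j i (fun k' i' j' => -u k' i' j') := by
  constructor
  · intro k' i' j' hN
    simp [h.1 k' i' j' hN]
  · have h2 := h.2
    have : ∀ k' : Fin S, ∑ i', ∑ j', (-u k' i' j') • (v.φ k' i' - v.φ k' j')
        = -∑ i', ∑ j', u k' i' j' • (v.φ k' i' - v.φ k' j') := by
      intro k'
      rw [← Finset.sum_neg_distrib]
      refine Finset.sum_congr rfl fun i' _ => ?_
      rw [← Finset.sum_neg_distrib]
      exact Finset.sum_congr rfl fun j' _ => by rw [neg_smul]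
    rw [Finset.sum_congr rfl (fun k' _ => this k'), Finset.sum_neg_distrib, ← h2]
    abel

private lemma cost_neg (v : Inst S A d) (u : Fin S → Fin A → Fin A → ℝ) :
    v.cost (fun k' i' j' => -u k' i' j') = v.cost u := by
  rw [Inst.cost, Inst.cost]
  refine Finset.sum_congr rfl fun k' _ => Finset.sum_congr rfl fun i' _ =>
    Finset.sum_congr rfl fun j' _ => by rw [neg_sq]

private lemma low_unique (v : Inst S A d) {k : Fin S} {i j : Fin A}
    {w1 w2 : Fin S → Fin A → Fin A → ℝ} (h1 : v.IsLOW k i j w1)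
    (h2 : v.Feasible k i j w2) (hc : v.cost w2 ≤ v.cost w1) :
    ∀ k' i' j', w1 k' i' j' = w2 k' i' j' := by
  classical
  set mid : Fin S → Fin A → Fin A → ℝ :=
    fun k' i' j' => (w1 k' i' j' + w2 k' i' j') / 2 with hmid
  have hmid_feas : v.Feasible k i j mid := by
    constructor
    · intro k' i' j' hN
      rw [hmid]
      simp only []
      rw [h1.1.1 k' i' j' hN, h2.1 k' i' j' hN]
      norm_num
    · have e1 := feas_flat v k i j w1 h1.1
      have e2 := feas_flat v k i j w2 h2
      rw [show (v.φ k i - v.φ k j : EuclideanSpace ℝ (Fin d))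
          = ∑ t : Fin S × Fin A × Fin A,
            mid t.1 t.2.1 t.2.2 • (v.φ t.1 t.2.1 - v.φ t.1 t.2.2) from ?_,
        triple_sum (f := fun k' i' j' => mid k' i' j' • (v.φ k' i' - v.φ k' j'))]
      have : ∀ t : Fin S × Fin A × Fin A,
          mid t.1 t.2.1 t.2.2 • (v.φ t.1 t.2.1 - v.φ t.1 t.2.2)
          = (2⁻¹ : ℝ) • (w1 t.1 t.2.1 t.2.2 • (v.φ t.1 t.2.1 - v.φ t.1 t.2.2)
            + w2 t.1 t.2.1 t.2.2 • (v.φ t.1 t.2.1 - v.φ t.1 t.2.2)) := by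
        intro t
        rw [hmid]
        simp only []
        rw [smul_add, smul_smul, smul_smul, ← add_smul]
        congr 1
        ring
      rw [Finset.sum_congr rfl fun t _ => this t, ← Finset.smul_sum,
        Finset.sum_add_distrib, ← e1, ← e2]
      rw [smul_add]
      rw [← add_smul]
      norm_num
  have hcost_mid_ge : v.cost w1 ≤ v.cost mid := h1.2 mid hmid_feas
  -- pointwise inequality
  set F : (Fin S → Fin A → Fin A → ℝ) → Fin S × Fin A × Fin A → ℝ :=
    fun u t => if 0 < v.N t.1 t.2.1 t.2.2 then (u t.1 t.2.1 t.2.2) ^ 2 / v.N t.1 t.2.1 t.2.2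
      else 0 with hF
  have hpnt : ∀ t : Fin S × Fin A × Fin A, F mid t ≤ (F w1 t + F w2 t) / 2 := by
    intro t
    rw [hF]
    simp only []
    by_cases hN : 0 < v.N t.1 t.2.1 t.2.2
    · simp only [if_pos hN]
      rw [← add_div, div_div]
      rw [div_le_div_iff₀ hN (by positivity)]
      have : mid t.1 t.2.1 t.2.2 = (w1 t.1 t.2.1 t.2.2 + w2 t.1 t.2.1 t.2.2) / 2 := rfl
      rw [this]
      nlinarith [sq_nonneg (w1 t.1 t.2.1 t.2.2 - w2 t.1 t.2.1 t.2.2), hN]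
    · simp [if_neg hN]
  have hsum_le : ∑ t : Fin S × Fin A × Fin A, F mid t
      ≤ ∑ t : Fin S × Fin A × Fin A, (F w1 t + F w2 t) / 2 :=
    Finset.sum_le_sum fun t _ => hpnt t
  have hsum_ge : ∑ t : Fin S × Fin A × Fin A, (F w1 t + F w2 t) / 2
      ≤ ∑ t : Fin S × Fin A × Fin A, F mid t := by
    have e0 : ∑ t : Fin S × Fin A × Fin A, (F w1 t + F w2 t) / 2
        = (v.cost w1 + v.cost w2) / 2 := by
      rw [cost_flat v w1, cost_flat v w2, ← Finset.sum_add_distrib, ← Finset.sum_div]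
    rw [e0, ← cost_flat v mid]
    have := hcost_mid_ge
    linarith
  have heq : ∀ t ∈ (Finset.univ : Finset (Fin S × Fin A × Fin A)),
      F mid t = (F w1 t + F w2 t) / 2 := by
    rw [← Finset.sum_eq_sum_iff_of_le fun t _ => hpnt t]
    exact le_antisymm hsum_le hsum_ge
  intro k' i' j'
  by_cases hN : 0 < v.N k' i' j'
  · have := heq (k', i', j') (Finset.mem_univ _)
    rw [hF] at this
    simp only [if_pos hN] at this
    have hmid_eq : mid k' i' j' = (w1 k' i' j' + w2 k' i' j') / 2 := rfl
    rw [hmid_eq] at this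
    have hN' : v.N k' i' j' ≠ 0 := ne_of_gt hN
    have hz : (w1 k' i' j' - w2 k' i' j')^2 / v.N k' i' j' = 0 := by
      linear_combination (-4 : ℝ) * this
    have h7 : (w1 k' i' j' - w2 k' i' j')^2 = 0 := by
      rcases div_eq_zero_iff.1 hz with h | h
      · exact h
      · exact absurd h hN'
    have := pow_eq_zero_iff (n := 2) (by norm_num) |>.1 h7
    linarith [sub_eq_zero.1 this]
  · have hN0 : v.N k' i' j' = 0 := le_antisymm (not_lt.1 hN) (v.N_nonneg k' i' j')
    rw [h1.1.1 k' i' j' hN0, h2.1 k' i' j' hN0]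

private lemma feas_inner (v : Inst S A d) (k : Fin S) (i j : Fin A)
    (u : Fin S → Fin A → Fin A → ℝ) (h : v.Feasible k i j u) :
    v.r k i - v.r k j = ∑ t : Fin S × Fin A × Fin A,
      u t.1 t.2.1 t.2.2 * (v.r t.1 t.2.1 - v.r t.1 t.2.2) := by
  have hflat := feas_flat v k i j u h
  have := congrArg (fun x : EuclideanSpace ℝ (Fin d) => @inner ℝ _ _ x v.θ) hflat
  simp only [inner_sub_left, sum_inner, real_inner_smul_left] at this
  rw [Inst.r, Inst.r]
  rw [this]
  exact Finset.sum_congr rfl fun t _ => rfl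

end LowHelpers

/-- **Bias bound for the RL-LOW relative-reward estimate.**
For every consistent instance `v`, every `n ≥ 1` with `n·N_{k,i,j} ∈ ℕ`, and every
`(k,i)` with `i ≠ i*_k`,
`|E[r̂_{k,i*_k,i}] − (r_{k,i*_k} − r_{k,i})| ≤ 3·γ̃_{k,i}/((1−β)⁴·√n)` with
`β = e^{2L}/(1+e^{2L})`. -/
theorem rl_low_estimate_bias_bound (L : ℝ) (hL : 0 < L)
    (S A d : ℕ) (hA : 2 ≤ A)
    (v : Inst S A d) (hr : ∀ k i, |v.r k i| ≤ L) (hcons : v.Consistent)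
    (istar : Fin S → Fin A) (histar : v.BestAction istar)
    (w : Fin S → Fin A → Fin A → Fin S → Fin A → Fin A → ℝ)
    (hw : ∀ k i j, i ≠ j → v.IsLOW k i j (w k i j))
    (n : ℕ) (hn : 1 ≤ n)
    (hdiv : ∀ k i j, ∃ m : ℕ, (m : ℝ) = n * v.N k i j)
    (Ω : Type) [MeasurableSpace Ω] (P : MeasureTheory.Measure Ω)
    [MeasureTheory.IsProbabilityMeasure P]
    (Y : Fin S → Fin A → Fin A → Ω → ℕ) (hY : IsBTLSample v n P Y)
    (k : Fin S) (i : Fin A) (hi : i ≠ istar k) :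
    |(∫ ω, v.rhat L n w (fun k' i' j' => Y k' i' j' ω) k (istar k) i ∂P) -
        (v.r k (istar k) - v.r k i)| ≤
      3 * v.gammaTilde (w k i (istar k)) /
        ((1 - Real.exp (2 * L) / (1 + Real.exp (2 * L))) ^ 4 * Real.sqrt n) := by
  classical
  have hE : (0:ℝ) < Real.exp (2 * L) := Real.exp_pos _
  have hE1 : (1:ℝ) ≤ Real.exp (2 * L) := by
    rw [← Real.exp_zero]; exact Real.exp_le_exp.2 (by linarith)
  have hβ : 1 - Real.exp (2 * L) / (1 + Real.exp (2 * L))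
      = 1 / (1 + Real.exp (2 * L)) := by field_simp; ring
  have hne : istar k ≠ i := Ne.symm hi
  set W := w k (istar k) i with hWdef
  have hlow1 : v.IsLOW k (istar k) i W := hw k (istar k) i hne
  have hlow2 : v.IsLOW k i (istar k) (w k i (istar k)) := hw k i (istar k) hi
  -- weight symmetry: W = -(w k i (istar k)) pointwise
  have hfeasneg : v.Feasible k (istar k) i
      (fun k' i' j' => -(w k i (istar k) k' i' j')) :=
    feas_neg v k i (istar k) _ hlow2.1
  have hWneg_feas : v.Feasible k i (istar k) (fun k' i' j' => -W k' i' j') :=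
    feas_neg v k (istar k) i W hlow1.1
  have hcost_le : v.cost (w k i (istar k)) ≤ v.cost W := by
    have h := hlow2.2 _ hWneg_feas
    rwa [cost_neg] at h
  have habs_eq : ∀ k' i' j', W k' i' j' = -(w k i (istar k) k' i' j') :=
    low_unique v hlow1 hfeasneg (by rw [cost_neg]; exact hcost_le)
  have hgamma_eq : v.gammaTilde W = v.gammaTilde (w k i (istar k)) := by
    rw [Inst.gammaTilde, Inst.gammaTilde]
    refine Finset.sum_congr rfl fun k' _ => Finset.sum_congr rfl fun i' _ =>
      Finset.sum_congr rfl fun j' _ => ?_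
    rw [habs_eq k' i' j', abs_neg]
  -- notation
  have hn0 : (0:ℝ) < n := by exact_mod_cast hn
  have hsn : (0:ℝ) < Real.sqrt n := Real.sqrt_pos.2 hn0
  set G : Fin S × Fin A × Fin A → Ω → ℝ := fun t ω =>
    W t.1 t.2.1 t.2.2 *
      logit (clip L (v.B n (fun a b c => Y a b c ω) t.1 t.2.1 t.2.2)) with hGdef
  set Δ : Fin S × Fin A × Fin A → ℝ := fun t => v.r t.1 t.2.1 - v.r t.1 t.2.2 with hΔdef
  set bnd : Fin S × Fin A × Fin A → ℝ := fun t =>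
    if 0 < v.N t.1 t.2.1 t.2.2 then
      (1 + Real.exp (2 * L)) / (Real.sqrt n * Real.sqrt (v.N t.1 t.2.1 t.2.2))
    else 0 with hbnd_def
  -- per-term integrability and bias bound
  have hkey : ∀ t : Fin S × Fin A × Fin A, Integrable (G t) P ∧
      |(∫ ω, G t ω ∂P) - W t.1 t.2.1 t.2.2 * Δ t| ≤ |W t.1 t.2.1 t.2.2| * bnd t := by
    intro t
    by_cases hNt : 0 < v.N t.1 t.2.1 t.2.2
    · obtain ⟨m, hm⟩ := hdiv t.1 t.2.1 t.2.2
      have hm0 : (0:ℝ) < m := by rw [hm]; positivity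
      have hm1 : 1 ≤ m := by exact_mod_cast hm0
      have hB : ∀ ω, v.B n (fun a b c => Y a b c ω) t.1 t.2.1 t.2.2
          = (Y t.1 t.2.1 t.2.2 ω : ℝ) / (m : ℝ) := by
        intro ω
        rw [Inst.B, if_pos hNt, ← hm]
      have hΔabs : |Δ t| ≤ 2 * L := by
        have ha := abs_le.1 (hr t.1 t.2.1)
        have hb := abs_le.1 (hr t.1 t.2.2)
        have hre : Δ t = v.r t.1 t.2.1 - v.r t.1 t.2.2 := rfl
        rw [hre, abs_le]
        constructor <;> linarith [ha.1, ha.2, hb.1, hb.2]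
      have hbin : HasBinomialLaw P (Y t.1 t.2.1 t.2.2) m (RLHF.sigmoid (Δ t)) := by
        have h := hY.2.1 t.1 t.2.1 t.2.2 hNt
        rwa [← hm, Nat.ceil_natCast] at h
      obtain ⟨hint0, hbb⟩ := key_term L hL P (Y t.1 t.2.1 t.2.2)
        (hY.1 t.1 t.2.1 t.2.2) m hm1 (Δ t) hΔabs hbin
      have hfun_eq : (fun ω => logit (clip L (v.B n (fun a b c => Y a b c ω)
          t.1 t.2.1 t.2.2))) = fun ω => logit (clip L ((Y t.1 t.2.1 t.2.2 ω : ℝ) / m)) :=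
        funext fun ω => by rw [hB ω]
      have hint : Integrable (G t) P := by
        have : G t = fun ω => W t.1 t.2.1 t.2.2 *
            logit (clip L ((Y t.1 t.2.1 t.2.2 ω : ℝ) / m)) := by
          funext ω
          rw [hGdef]
          simp only [hB ω]
        rw [this]
        exact hint0.const_mul _
      refine ⟨hint, ?_⟩
      have hInt_eq : (∫ ω, G t ω ∂P)
          = W t.1 t.2.1 t.2.2 * ∫ ω, logit (clip L ((Y t.1 t.2.1 t.2.2 ω : ℝ) / m)) ∂P := by
        have : G t = fun ω => W t.1 t.2.1 t.2.2 *
            logit (clip L ((Y t.1 t.2.1 t.2.2 ω : ℝ) / m)) := by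
          funext ω
          rw [hGdef]
          simp only [hB ω]
        rw [this]
        exact integral_const_mul _ _
      rw [hInt_eq, ← mul_sub, abs_mul]
      refine mul_le_mul_of_nonneg_left ?_ (abs_nonneg _)
      have hsqrt : Real.sqrt (m : ℝ) = Real.sqrt n * Real.sqrt (v.N t.1 t.2.1 t.2.2) := by
        rw [hm, Real.sqrt_mul (by positivity)]
      rw [hbnd_def]
      simp only [if_pos hNt]
      rw [← hsqrt]
      exact hbb
    · have hN0 : v.N t.1 t.2.1 t.2.2 = 0 :=
        le_antisymm (not_lt.1 hNt) (v.N_nonneg _ _ _)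
      have hW0 : W t.1 t.2.1 t.2.2 = 0 := hlow1.1.1 _ _ _ hN0
      have hG0 : G t = fun _ => 0 := by
        funext ω
        rw [hGdef]
        simp only [hW0, zero_mul]
      rw [hG0]
      refine ⟨integrable_const 0, ?_⟩
      simp [hW0]
  -- the integral of rhat
  have hrhat_eq : (∫ ω, v.rhat L n w (fun k' i' j' => Y k' i' j' ω) k (istar k) i ∂P)
      = ∑ t : Fin S × Fin A × Fin A, ∫ ω, G t ω ∂P := by
    have hpt : ∀ ω : Ω, v.rhat L n w (fun k' i' j' => Y k' i' j' ω) k (istar k) i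
        = ∑ t : Fin S × Fin A × Fin A, G t ω := by
      intro ω
      rw [Inst.rhat, if_neg hne]
      exact triple_sum (f := fun k' i' j' => W k' i' j' *
        logit (clip L (v.B n (fun a b c => Y a b c ω) k' i' j')))
    rw [show (fun ω => v.rhat L n w (fun k' i' j' => Y k' i' j' ω) k (istar k) i)
      = fun ω => ∑ t : Fin S × Fin A × Fin A, G t ω from funext hpt]
    exact integral_finset_sum _ fun t _ => (hkey t).1
  -- the target gap
  have hgap : v.r k (istar k) - v.r k i
      = ∑ t : Fin S × Fin A × Fin A, W t.1 t.2.1 t.2.2 * Δ t :=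
    feas_inner v k (istar k) i W hlow1.1
  -- sum the per-term bounds
  have hsum_bound : |(∫ ω, v.rhat L n w (fun k' i' j' => Y k' i' j' ω) k (istar k) i ∂P)
      - (v.r k (istar k) - v.r k i)|
      ≤ ∑ t : Fin S × Fin A × Fin A, |W t.1 t.2.1 t.2.2| * bnd t := by
    rw [hrhat_eq, hgap, ← Finset.sum_sub_distrib]
    exact (Finset.abs_sum_le_sum_abs _ _).trans
      (Finset.sum_le_sum fun t _ => (hkey t).2)
  -- rewrite the bound as gammaTilde
  have hgt_flat : ∑ t : Fin S × Fin A × Fin A, |W t.1 t.2.1 t.2.2| * bnd t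
      = (1 + Real.exp (2 * L)) / Real.sqrt n * v.gammaTilde W := by
    rw [Inst.gammaTilde, triple_sum (f := fun k' i' j' =>
      if 0 < v.N k' i' j' then |W k' i' j'| / Real.sqrt (v.N k' i' j') else 0),
      Finset.mul_sum]
    refine Finset.sum_congr rfl fun t _ => ?_
    by_cases hNt : 0 < v.N t.1 t.2.1 t.2.2
    · rw [hbnd_def]
      simp only [if_pos hNt]
      have hsN : (0:ℝ) < Real.sqrt (v.N t.1 t.2.1 t.2.2) := Real.sqrt_pos.2 hNt
      field_simp
    · have hN0 : v.N t.1 t.2.1 t.2.2 = 0 :=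
        le_antisymm (not_lt.1 hNt) (v.N_nonneg _ _ _)
      have hW0 : W t.1 t.2.1 t.2.2 = 0 := hlow1.1.1 _ _ _ hN0
      rw [hbnd_def]
      simp [hNt, hW0]
  have hγ_nonneg : 0 ≤ v.gammaTilde W := by
    rw [Inst.gammaTilde]
    refine Finset.sum_nonneg fun k' _ => Finset.sum_nonneg fun i' _ =>
      Finset.sum_nonneg fun j' _ => ?_
    by_cases hNt : 0 < v.N k' i' j' <;> simp [hNt] <;> positivity
  -- final comparison
  have hfinal : (1 + Real.exp (2 * L)) / Real.sqrt n * v.gammaTilde W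
      ≤ 3 * v.gammaTilde (w k i (istar k)) /
        ((1 - Real.exp (2 * L) / (1 + Real.exp (2 * L))) ^ 4 * Real.sqrt n) := by
    rw [hβ, ← hgamma_eq]
    have hc : (2:ℝ) ≤ 1 + Real.exp (2 * L) := by linarith
    have h9 : (1:ℝ) ≤ (1 + Real.exp (2 * L)) ^ 3 := by
      have h8 := pow_le_pow_left₀ (by norm_num : (0:ℝ) ≤ 2) hc 3
      norm_num at h8
      linarith
    have hkeyineq : (1 + Real.exp (2 * L)) * (1 / (1 + Real.exp (2 * L))) ^ 4 ≤ 3 := by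
      rw [div_pow, one_pow, mul_one_div]
      rw [div_le_iff₀ (by positivity)]
      nlinarith [h9, hc]
    rw [div_mul_eq_mul_div, div_le_div_iff₀ hsn (by positivity)]
    have hexp : 0 ≤ (1 / (1 + Real.exp (2 * L))) ^ 4 := by positivity
    nlinarith [mul_le_mul_of_nonneg_right hkeyineq hγ_nonneg, hsn.le,
      mul_nonneg (mul_nonneg hexp hγ_nonneg) hsn.le]
  exact hsum_bound.trans (le_of_eq hgt_flat |>.trans hfinal)
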